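/- Let U ⊆ ℝ² be an open set, p ∈ U, and let f : U → ℝ² be a continuous function such that the restriction of f to U ∖ {p} is an open map (i.e., f maps every open subset of U not containing p to an open subset of ℝ²). Then f itself is an open map on U. -/

import Mathlib

open Metric Set Topology Filter

/-- A punctured ball in `ℝ × ℝ` is preconnected. -/
lemma punctured_ball_preconnected (c : ℝ × ℝ) (r : ℝ) :
    IsPreconnected (Metric.ball c r \ {c}) := by
  rcases le_or_gt r 0 with hr | hr
  · rw [Metric.ball_eq_empty.2 hr, Set.empty_diff]
    exact isPreconnected_empty
  · have hrank : 1 < Module.rank ℝ (ℝ × ℝ) := by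
      rw [rank_prod', Module.rank_self]
      norm_num
    set g : ℝ × (ℝ × ℝ) → ℝ × ℝ := fun z => c + z.1 • z.2 with hg
    have hpre : IsPreconnected ((Set.Ioo (0:ℝ) r) ×ˢ (Metric.sphere (0:ℝ×ℝ) 1)) :=
      isPreconnected_Ioo.prod (isPreconnected_sphere hrank 0 1)
    have hgc : Continuous g := continuous_const.add (continuous_fst.smul continuous_snd)
    have himg := hpre.image g hgc.continuousOn
    have heq : g '' ((Set.Ioo (0:ℝ) r) ×ˢ (Metric.sphere (0:ℝ×ℝ) 1))
        = Metric.ball c r \ {c} := by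
      ext y
      constructor
      · rintro ⟨⟨t, u⟩, ⟨⟨ht0, htr⟩, hu⟩, rfl⟩
        have hu1 : ‖u‖ = 1 := by simpa using hu
        have hnorm : ‖t • u‖ = t := by
          rw [norm_smul, hu1, mul_one, Real.norm_eq_abs, abs_of_pos ht0]
        constructor
        · rw [Metric.mem_ball, dist_eq_norm]
          simpa [hg, add_sub_cancel_left, hnorm] using htr
        · simp only [Set.mem_singleton_iff]
          intro h
          have : t • u = 0 := by
            have := congrArg (fun z => z - c) h
            simpa [hg, add_sub_cancel_left] using this
          rw [this, norm_zero] at hnorm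
          exact ht0.ne hnorm
      · rintro ⟨hy, hyc⟩
        have hyc' : y - c ≠ 0 := sub_ne_zero.2 (by simpa using hyc)
        have hn : (0:ℝ) < ‖y - c‖ := norm_pos_iff.2 hyc'
        refine ⟨(‖y - c‖, ‖y - c‖⁻¹ • (y - c)), ⟨⟨hn, ?_⟩, ?_⟩, ?_⟩
        · rw [Metric.mem_ball, dist_eq_norm] at hy
          exact hy
        · simp [norm_smul, abs_of_pos hn, inv_mul_cancel₀ hn.ne']
        · simp only [hg, smul_smul, mul_inv_cancel₀ hn.ne', one_smul]
          abel
    rwa [heq] at himg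

theorem stmt19 (U : Set (ℝ × ℝ)) (hU : IsOpen U) (p : ℝ × ℝ) (hp : p ∈ U)
    (f : ℝ × ℝ → ℝ × ℝ) (hcont : ContinuousOn f U)
    (hopen : ∀ V : Set (ℝ × ℝ), IsOpen V → V ⊆ U → p ∉ V → IsOpen (f '' V)) :
    ∀ V : Set (ℝ × ℝ), IsOpen V → V ⊆ U → IsOpen (f '' V) := by
  intro V hV hVU
  -- the image of `V \ {p}` is open
  have hW₀ : IsOpen (f '' (V \ {p})) :=
    hopen _ (hV.sdiff isClosed_singleton) (Set.diff_subset.trans hVU)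
      (fun h => h.2 rfl)
  have hW₀sub : f '' (V \ {p}) ⊆ f '' V := Set.image_mono (f := f) Set.diff_subset
  rw [isOpen_iff_mem_nhds]
  rintro y ⟨x, hxV, rfl⟩
  by_cases hfx : f x ∈ f '' (V \ {p})
  · exact Filter.mem_of_superset (hW₀.mem_nhds hfx) hW₀sub
  -- then necessarily `x = p` (otherwise `f x ∈ f '' (V \ {p})`)
  have hxp : x = p := by
    by_contra h
    exact hfx ⟨x, ⟨hxV, h⟩, rfl⟩
  subst hxp
  -- choose a closed ball around `p` inside `V`
  obtain ⟨ε, hε, hball⟩ := Metric.isOpen_iff.1 hV x hxV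
  set δ := ε / 2 with hδ
  have hδ0 : 0 < δ := half_pos hε
  have hcbV : Metric.closedBall x δ ⊆ V := fun z hz =>
    hball (lt_of_le_of_lt hz (half_lt_self hε))
  have hcbU : Metric.closedBall x δ ⊆ U := hcbV.trans hVU
  -- the image of the sphere is compact, closed, and misses `f x`
  have hK : IsCompact (f '' Metric.sphere x δ) :=
    (isCompact_sphere x δ).image_of_continuousOn
      (hcont.mono ((Metric.sphere_subset_closedBall).trans hcbU))
  have hKne : (f '' Metric.sphere x δ).Nonempty :=
    (NormedSpace.sphere_nonempty.2 hδ0.le).image f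
  have hfxK : f x ∉ f '' Metric.sphere x δ := by
    rintro ⟨z, hz, hfz⟩
    have hzx : z ≠ x := by
      intro h; subst h
      rw [Metric.mem_sphere, dist_self] at hz
      exact hδ0.ne' hz.symm
    exact hfx ⟨z, ⟨hcbV (Metric.sphere_subset_closedBall hz), hzx⟩, hfz⟩
  set d := Metric.infDist (f x) (f '' Metric.sphere x δ) with hd
  have hd0 : 0 < d := (hK.isClosed.notMem_iff_infDist_pos hKne).1 hfxK
  -- the image `W` of the punctured ball is open
  set W := f '' (Metric.ball x δ \ {x}) with hW
  have hWopen : IsOpen W :=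
    hopen _ (Metric.isOpen_ball.sdiff isClosed_singleton)
      ((Set.diff_subset.trans Metric.ball_subset_closedBall).trans hcbU)
      (fun h => h.2 rfl)
  have hWsub : W ⊆ f '' (V \ {x}) := by
    apply Set.image_mono
    intro z hz
    exact ⟨hcbV (Metric.ball_subset_closedBall hz.1), hz.2⟩
  have hfxW : f x ∉ W := fun h => hfx (hWsub h)
  -- points of the small ball around `f x` are not in the image of the sphere
  have hdisj : ∀ y ∈ Metric.ball (f x) d, y ∉ f '' Metric.sphere x δ := by
    intro y hy hyK
    exact absurd (Metric.infDist_le_dist_of_mem hyK) (by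
      rw [dist_comm]
      exact not_le.2 hy)
  -- key claim: the punctured ball around `f x` is contained in `W`
  have hkey : Metric.ball (f x) d \ {f x} ⊆ W := by
    have hWcl : ∀ y ∈ closure W, y ∈ Metric.ball (f x) d \ {f x} → y ∈ W := by
      intro y hycl hys
      have hcb : IsCompact (f '' Metric.closedBall x δ) :=
        (isCompact_closedBall x δ).image_of_continuousOn (hcont.mono hcbU)
      have hWsub' : W ⊆ f '' Metric.closedBall x δ :=
        Set.image_mono (f := f) (Set.diff_subset.trans Metric.ball_subset_closedBall)
      have hy' : y ∈ f '' Metric.closedBall x δ :=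
        (closure_minimal hWsub' hcb.isClosed) hycl
      obtain ⟨z, hz, rfl⟩ := hy'
      rcases lt_or_eq_of_le (Metric.mem_closedBall.1 hz) with hlt | heq
      · have hzx : z ≠ x := by
          intro h; subst h
          exact hys.2 rfl
        exact ⟨z, ⟨Metric.mem_ball.2 hlt, hzx⟩, rfl⟩
      · exact absurd ⟨z, Metric.mem_sphere.2 heq, rfl⟩ (hdisj _ hys.1)
    have hpre := punctured_ball_preconnected (f x) d
    have hsub : Metric.ball (f x) d \ {f x} ⊆ W ∪ (closure W)ᶜ := by
      intro y hy
      by_cases h : y ∈ closure W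
      · exact Or.inl (hWcl y h hy)
      · exact Or.inr h
    -- `W` meets the punctured ball, by continuity of `f` at `x`
    have hmeet : (Metric.ball (f x) d \ {f x} ∩ W).Nonempty := by
      have hca : ContinuousAt f x := hcont.continuousAt (hU.mem_nhds (hVU hxV))
      have h1 : f ⁻¹' Metric.ball (f x) d ∈ 𝓝 x :=
        hca.preimage_mem_nhds (Metric.ball_mem_nhds _ hd0)
      have h2 : f ⁻¹' Metric.ball (f x) d ∩ Metric.ball x δ ∈ 𝓝 x :=
        Filter.inter_mem h1 (Metric.ball_mem_nhds _ hδ0)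
      have h3 : f ⁻¹' Metric.ball (f x) d ∩ Metric.ball x δ ∈ 𝓝[≠] x :=
        nhdsWithin_le_nhds h2
      obtain ⟨z, hz⟩ := Filter.nonempty_of_mem (Filter.inter_mem h3 self_mem_nhdsWithin)
      obtain ⟨⟨hz1, hz2⟩, hz3⟩ := hz
      have hzW : f z ∈ W := ⟨z, ⟨hz2, hz3⟩, rfl⟩
      exact ⟨f z, ⟨⟨hz1, fun h => hfxW (h ▸ hzW)⟩, hzW⟩⟩
    have := hpre.subset_left_of_subset_union hWopen isClosed_closure.isOpen_compl
      (disjoint_compl_right.mono_left subset_closure) hsub hmeet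
    exact this
  -- conclude: the ball around `f x` is inside `f '' V`
  have hballsub : Metric.ball (f x) d ⊆ f '' V := by
    intro y hy
    by_cases hyfx : y = f x
    · exact hyfx ▸ ⟨x, hxV, rfl⟩
    · exact hW₀sub (hWsub (hkey ⟨hy, hyfx⟩))
  exact Filter.mem_of_superset (Metric.ball_mem_nhds _ hd0) hballsub
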